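/- For two partitioned orders μ, μ' of [n], φ(μ) = φ(μ') holds if and only if for every automata network f : X → X (with X a product of finite alphabets indexed by [n]) the induced dynamics f|μ and f|μ' are equal as functions X → X. -/

import Mathlib

/-- A partitioned order of `[n]`: a set of pairwise disjoint nonempty lists
of distinct elements of `[n]` whose union is `[n]`. -/
structure PartitionedOrder (n : ℕ) where
  oblocks : Finset (List (Fin n))
  nonempty : ∀ S ∈ oblocks, S ≠ []
  nodup : ∀ S ∈ oblocks, S.Nodup
  disjoint : ∀ S ∈ oblocks, ∀ T ∈ oblocks, S ≠ T → ∀ x, x ∈ S → x ∉ T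
  cover : ∀ x : Fin n, ∃ S ∈ oblocks, x ∈ S

namespace PartitionedOrder

variable {n : ℕ}

/-- The block `W_ℓ = { S_k[ℓ mod n_k] : k }` of the sequential rewriting. -/
def phiBlock (μ : PartitionedOrder n) (ℓ : ℕ) : Finset (Fin n) :=
  μ.oblocks.attach.image (fun S =>
    S.1.get ⟨ℓ % S.1.length,
      Nat.mod_lt _ (List.length_pos_iff.mpr (μ.nonempty S.1 S.2))⟩)

/-- The period `p` of a partitioned order: the lcm of its o-block lengths. -/
def period (μ : PartitionedOrder n) : ℕ := μ.oblocks.lcm List.length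

/-- The sequential rewriting `φ(μ) = (W_0, …, W_{p-1})`. -/
def phi (μ : PartitionedOrder n) : List (Finset (Fin n)) :=
  (List.range μ.period).map μ.phiBlock

end PartitionedOrder

/-- An ordered partition of `[n]` (block-sequential update mode): a sequence of
nonempty pairwise disjoint subsets of `[n]` whose union is `[n]`. -/
def IsOrderedPartition {n : ℕ} (L : List (Finset (Fin n))) : Prop :=
  (∀ W ∈ L, W.Nonempty) ∧ L.Pairwise Disjoint ∧ ∀ x : Fin n, ∃ W ∈ L, x ∈ W

section AutomataNetwork

variable {n : ℕ} {X : Fin n → Type}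

/-- Update of the automata of the block `W`:
`f|W(x)_i = f_i(x)` if `i ∈ W` and `x_i` otherwise. -/
def updBlock (f : (∀ i, X i) → ∀ i, X i) (W : Finset (Fin n))
    (x : ∀ i, X i) : ∀ i, X i :=
  fun i => if i ∈ W then f x i else x i

/-- Update along a sequence of blocks:
`f|(W_0,…,W_{p-1}) = f|W_{p-1} ∘ ⋯ ∘ f|W_0`. -/
def updSeq (f : (∀ i, X i) → ∀ i, X i) (L : List (Finset (Fin n))) :
    (∀ i, X i) → ∀ i, X i :=
  L.foldl (fun g W => updBlock f W ∘ g) id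

end AutomataNetwork

namespace AuxPO

variable {n : ℕ}

/-- fold step: first component is list of recorded digits (cnt_j+1 at each update
of i), second is count of updates of j so far. -/
def step (i j : Fin n) (pr : List ℕ × ℕ) (W : Finset (Fin n)) : List ℕ × ℕ :=
  (if i ∈ W then pr.1 ++ [pr.2 + 1] else pr.1, if j ∈ W then pr.2 + 1 else pr.2)

def Dp (i j : Fin n) (L : List (Finset (Fin n))) : List ℕ × ℕ :=
  L.foldl (step i j) ([], 0)

def D (i j : Fin n) (L : List (Finset (Fin n))) : List ℕ := (Dp i j L).1

def cnt (i j : Fin n) (L : List (Finset (Fin n))) : ℕ := (Dp i j L).2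

lemma foldl_step_shift (i j : Fin n) (L : List (Finset (Fin n))) :
    ∀ l0 c0, L.foldl (step i j) (l0, c0) =
      (l0 ++ (D i j L).map (· + c0), c0 + cnt i j L) := by
  induction L with
  | nil => intro l0 c0; simp [D, cnt, Dp]
  | cons W T ih =>
    intro l0 c0
    have hcons : Dp i j (W :: T) = T.foldl (step i j) (step i j ([], 0) W) := rfl
    have h1 : step i j ([], 0) W =
        ((if i ∈ W then [1] else []), (if j ∈ W then 1 else 0)) := by
      simp [step]
    have h2 := ih (if i ∈ W then [1] else []) (if j ∈ W then 1 else 0)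
    have hD : D i j (W :: T) =
        (if i ∈ W then [1] else []) ++ (D i j T).map (· + (if j ∈ W then 1 else 0)) := by
      simp [D, hcons, h1, h2]
    have hc : cnt i j (W :: T) = (if j ∈ W then 1 else 0) + cnt i j T := by
      simp [cnt, hcons, h1, h2]
    have h3 : (W :: T).foldl (step i j) (l0, c0) = T.foldl (step i j) (step i j (l0, c0) W) := rfl
    rw [h3]
    have h4 : step i j (l0, c0) W =
        ((if i ∈ W then l0 ++ [c0 + 1] else l0), (if j ∈ W then c0 + 1 else c0)) := rfl
    rw [h4, ih, hD, hc]
    have hmap : ∀ c1 ε : ℕ, c1 = ε + c0 →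
        List.map (· + c1) (D i j T) =
          List.map (· + c0) (List.map (· + ε) (D i j T)) := by
      intro c1 ε hc1
      rw [List.map_map]
      apply List.map_congr_left
      intro a _
      simp [Function.comp]
      omega
    simp only [Prod.mk.injEq]
    constructor
    · rw [List.map_append]
      by_cases hi : i ∈ W <;> by_cases hj : j ∈ W <;>
        simp only [hi, hj, if_true, if_false, ite_true, ite_false]
      · rw [← hmap (c0 + 1) 1 (by omega)]
        simp [List.append_assoc, Nat.add_comm]
      · rw [← hmap c0 0 (by omega)]
        simp [List.append_assoc, Nat.add_comm]
      · rw [← hmap (c0 + 1) 1 (by omega)]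
        simp [List.append_assoc, Nat.add_comm]
      · rw [← hmap c0 0 (by omega)]
        simp [List.append_assoc, Nat.add_comm]
    · by_cases hj : j ∈ W <;> simp only [hj, ite_true, ite_false] <;> omega

lemma D_cons (i j : Fin n) (W : Finset (Fin n)) (T : List (Finset (Fin n))) :
    D i j (W :: T) =
      (if i ∈ W then [1] else []) ++ (D i j T).map (· + (if j ∈ W then 1 else 0)) := by
  have h1 : step i j ([], 0) W =
      ((if i ∈ W then [1] else []), (if j ∈ W then 1 else 0)) := by simp [step]
  have : Dp i j (W :: T) = T.foldl (step i j) (step i j ([], 0) W) := rfl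
  simp [D, this, h1, foldl_step_shift]

lemma D_append (i j : Fin n) (L : List (Finset (Fin n))) (W : Finset (Fin n)) :
    D i j (L ++ [W]) = if i ∈ W then D i j L ++ [cnt i j L + 1] else D i j L := by
  have : Dp i j (L ++ [W]) = step i j (Dp i j L) W := by
    simp [Dp, List.foldl_append]
  by_cases hi : i ∈ W <;> simp [D, this, step, hi, cnt]

lemma cnt_append (i j : Fin n) (L : List (Finset (Fin n))) (W : Finset (Fin n)) :
    cnt i j (L ++ [W]) = if j ∈ W then cnt i j L + 1 else cnt i j L := by
  have : Dp i j (L ++ [W]) = step i j (Dp i j L) W := by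
    simp [Dp, List.foldl_append]
  by_cases hj : j ∈ W <;> simp [cnt, this, step, hj]

lemma cnt_le (i j : Fin n) (L : List (Finset (Fin n))) : cnt i j L ≤ L.length := by
  induction L using List.reverseRecOn with
  | nil => simp [cnt, Dp]
  | append_singleton L W ih =>
    rw [cnt_append]
    by_cases hj : j ∈ W <;> simp [hj] <;> omega

lemma length_D_le (i j : Fin n) (L : List (Finset (Fin n))) :
    (D i j L).length ≤ L.length := by
  induction L using List.reverseRecOn with
  | nil => simp [D, Dp]
  | append_singleton L W ih =>
    rw [D_append]
    by_cases hi : i ∈ W <;> simp [hi] <;> omega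

lemma mem_D_bounds (i j : Fin n) (L : List (Finset (Fin n))) :
    ∀ d ∈ D i j L, 1 ≤ d ∧ d ≤ L.length := by
  induction L using List.reverseRecOn with
  | nil => simp [D, Dp]
  | append_singleton L W ih =>
    rw [D_append]
    by_cases hi : i ∈ W <;> simp only [hi, if_true, if_false]
    · intro d hd
      rcases List.mem_append.mp hd with h | h
      · have := ih d h; simp; omega
      · simp at h; have := cnt_le i j L; simp; omega
    · intro d hd; have := ih d hd; simp; omega

lemma D_nil (i j : Fin n) : D i j ([] : List (Finset (Fin n))) = [] := rfl

lemma head_mem_iff (hn : 2 ≤ n) {W : Finset (Fin n)} {T : List (Finset (Fin n))}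
    (hne : W.Nonempty) (i : Fin n) :
    i ∈ W ↔ ∀ j : Fin n, j ≠ i → (D i j (W :: T)).head? = some 1 := by
  constructor
  · intro hi j _
    rw [D_cons]
    simp [hi]
  · intro h
    by_contra hi
    obtain ⟨j, hj⟩ := hne
    have hji : j ≠ i := fun e => hi (e ▸ hj)
    have := h j hji
    rw [D_cons] at this
    simp only [hi, if_false, List.nil_append, List.head?_map] at this
    rcases hD : (D i j T).head? with _ | d
    · rw [hD] at this; simp at this
    · rw [hD] at this
      simp [hj] at this
      have hd : d ∈ D i j T := List.mem_of_mem_head? hD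
      have hb := mem_D_bounds i j T d hd
      omega

lemma exists_ne' (hn : 2 ≤ n) (i : Fin n) : ∃ j : Fin n, j ≠ i := by
  haveI : Nontrivial (Fin n) := Fin.nontrivial_iff_two_le.mpr hn
  exact exists_ne i

lemma D_ne_nil (i j : Fin n) {W : Finset (Fin n)} (T : List (Finset (Fin n)))
    (hi : i ∈ W) : D i j (W :: T) ≠ [] := by
  rw [D_cons]; simp [hi]

lemma reconstruct (hn : 2 ≤ n) : ∀ L L' : List (Finset (Fin n)),
    (∀ V ∈ L, V.Nonempty) → (∀ V ∈ L', V.Nonempty) →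
    (∀ i j : Fin n, j ≠ i → D i j L = D i j L') → L = L' := by
  intro L
  induction L with
  | nil =>
    intro L' _ hne' h
    cases L' with
    | nil => rfl
    | cons W' T' =>
      obtain ⟨i, hi⟩ := hne' W' (by simp)
      obtain ⟨j, hj⟩ := exists_ne' hn i
      exact absurd (h i j hj).symm (D_ne_nil i j T' hi)
  | cons W T ih =>
    intro L' hne hne' h
    cases L' with
    | nil =>
      obtain ⟨i, hi⟩ := hne W (by simp)
      obtain ⟨j, hj⟩ := exists_ne' hn i
      exact absurd (h i j hj) (D_ne_nil i j T hi)
    | cons W' T' =>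
      have hW : W = W' := by
        ext i
        rw [head_mem_iff hn (hne W (by simp)) i,
            head_mem_iff hn (hne' W' (by simp)) i]
        constructor <;> intro hh j hj <;> [rw [← h i j hj]; rw [h i j hj]] <;>
          exact hh j hj
      subst hW
      have hT : T = T' := by
        apply ih T' (fun V hV => hne V (by simp [hV]))
          (fun V hV => hne' V (by simp [hV]))
        intro i j hj
        have := h i j hj
        rw [D_cons, D_cons] at this
        have h2 := List.append_cancel_left this
        exact List.map_injective_iff.mpr (fun a b => by omega) h2
      rw [hT]

/-! ### base-B encoding -/

def encode (B : ℕ) (l : List ℕ) : ℕ := l.foldl (fun a d => a * B + d) 0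

lemma encode_append (B : ℕ) (l : List ℕ) (d : ℕ) :
    encode B (l ++ [d]) = encode B l * B + d := by
  simp [encode, List.foldl_append]

lemma encode_pos {B : ℕ} : ∀ l : List ℕ, l ≠ [] → (∀ d ∈ l, 1 ≤ d) →
    1 ≤ encode B l := by
  intro l
  induction l using List.reverseRecOn with
  | nil => intro h; exact absurd rfl h
  | append_singleton l d _ =>
    intro _ hd
    rw [encode_append]
    have : 1 ≤ d := hd d (by simp)
    omega

lemma encode_lt {B : ℕ} (hB : 1 ≤ B) : ∀ l : List ℕ, (∀ d ∈ l, d < B) →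
    encode B l < B ^ l.length := by
  intro l
  induction l using List.reverseRecOn with
  | nil => intro _; simp [encode]
  | append_singleton l d ih =>
    intro hd
    rw [encode_append]
    have h1 : encode B l < B ^ l.length := ih (fun e he => hd e (by simp [he]))
    have h2 : d < B := hd d (by simp)
    have : (encode B l + 1) * B ≤ B ^ l.length * B := Nat.mul_le_mul_right B h1
    simp only [List.length_append, List.length_singleton]
    calc encode B l * B + d < (encode B l + 1) * B := by nlinarith
      _ ≤ B ^ l.length * B := this
      _ = B ^ (l.length + 1) := by ring

lemma encode_inj {B : ℕ} : ∀ l1 l2 : List ℕ,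
    (∀ d ∈ l1, 1 ≤ d ∧ d < B) → (∀ d ∈ l2, 1 ≤ d ∧ d < B) →
    encode B l1 = encode B l2 → l1 = l2 := by
  intro l1
  induction l1 using List.reverseRecOn with
  | nil =>
    intro l2 _ h2 he
    cases l2 using List.reverseRecOn with
    | nil => rfl
    | append_singleton l d =>
      rw [encode_append] at he
      have := (h2 d (by simp)).1
      simp [encode] at he
      omega
  | append_singleton l1 d1 ih =>
    intro l2 h1 h2 he
    cases l2 using List.reverseRecOn with
    | nil =>
      rw [encode_append] at he
      have := (h1 d1 (by simp)).1
      simp [encode] at he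
      omega
    | append_singleton l2 d2 =>
      rw [encode_append, encode_append] at he
      have hd1 := h1 d1 (by simp)
      have hd2 := h2 d2 (by simp)
      have hBpos : 0 < B := by omega
      have hdd : d1 = d2 := by
        have m1 : (encode B l1 * B + d1) % B = d1 := by
          rw [Nat.mul_add_mod']; exact Nat.mod_eq_of_lt hd1.2
        have m2 : (encode B l2 * B + d2) % B = d2 := by
          rw [Nat.mul_add_mod']; exact Nat.mod_eq_of_lt hd2.2
        rw [← m1, ← m2, he]
      have hee : encode B l1 = encode B l2 := by
        have d1' : (encode B l1 * B + d1) / B = encode B l1 := by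
          rw [Nat.mul_comm, Nat.mul_add_div hBpos, Nat.div_eq_of_lt hd1.2]; omega
        have d2' : (encode B l2 * B + d2) / B = encode B l2 := by
          rw [Nat.mul_comm, Nat.mul_add_div hBpos, Nat.div_eq_of_lt hd2.2]; omega
        rw [← d1', ← d2', he]
      have := ih l2 (fun e he' => h1 e (by simp [he'])) (fun e he' => h2 e (by simp [he'])) hee
      rw [this, hdd]

/-! ### the witness network -/

def netf (i j : Fin n) (B M : ℕ) : (Fin n → ZMod M) → Fin n → ZMod M :=
  fun x k => if k = i then x i * (B : ZMod M) + x j + 1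
    else if k = j then x j + 1 else x k

lemma updSeq_append {X : Fin n → Type} (f : (∀ i, X i) → ∀ i, X i)
    (L : List (Finset (Fin n))) (W : Finset (Fin n)) (x : ∀ i, X i) :
    updSeq f (L ++ [W]) x = updBlock f W (updSeq f L x) := by
  simp [updSeq, List.foldl_append]

lemma eval (i j : Fin n) (hij : i ≠ j) (B M : ℕ)
    (L : List (Finset (Fin n))) :
    updSeq (X := fun _ => ZMod M) (netf i j B M) L (fun _ => 0) i
      = ((encode B (D i j L) : ℕ) : ZMod M) ∧
    updSeq (X := fun _ => ZMod M) (netf i j B M) L (fun _ => 0) j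
      = ((cnt i j L : ℕ) : ZMod M) := by
  induction L using List.reverseRecOn with
  | nil => simp [updSeq, encode, D, cnt, Dp]
  | append_singleton L W ih =>
    obtain ⟨h1, h2⟩ := ih
    rw [updSeq_append]
    constructor
    · by_cases hi : i ∈ W
      · simp only [updBlock, hi, if_true, netf, if_pos rfl]
        rw [h1, h2, D_append]
        simp only [hi, if_true, encode_append]
        push_cast
        ring
      · simp only [updBlock, hi, if_false]
        rw [h1, D_append]
        simp [hi]
    · by_cases hj : j ∈ W
      · simp only [updBlock, hj, if_true, netf, if_neg (Ne.symm hij), if_pos rfl]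
        rw [h2, cnt_append]
        simp only [hj, if_true]
        push_cast
        ring
      · simp only [updBlock, hj, if_false]
        rw [h2, cnt_append]
        simp [hj]

end AuxPO

/-- `φ(μ) = φ(μ')` iff for every automata network `f` on any
product of finite alphabets (each of cardinality at least 2) the induced
dynamics coincide. -/
theorem phi_eq_iff_dynamics_eq {n : ℕ} (hn : 2 ≤ n)
    (μ μ' : PartitionedOrder n) :
    μ.phi = μ'.phi ↔
    ∀ (X : Fin n → Type) [∀ i, Fintype (X i)],
      (∀ i, 2 ≤ Fintype.card (X i)) →
      ∀ f : (∀ i, X i) → ∀ i, X i,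
        updSeq f μ.phi = updSeq f μ'.phi := by
  constructor
  · intro h X _ hc f
    rw [h]
  · intro H
    have hne : ∀ (ν : PartitionedOrder n), ∀ V ∈ ν.phi, V.Nonempty := by
      intro ν V hV
      rw [PartitionedOrder.phi, List.mem_map] at hV
      obtain ⟨ℓ, -, rfl⟩ := hV
      obtain ⟨S, hS, -⟩ := ν.cover ⟨0, by omega⟩
      exact Finset.Nonempty.image ⟨⟨S, hS⟩, Finset.mem_attach _ _⟩ _
    apply AuxPO.reconstruct hn _ _ (hne μ) (hne μ')
    intro i j hji
    set P := μ.phi.length + μ'.phi.length with hPdef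
    haveI : NeZero ((P + 2) ^ (P + 1)) := ⟨by positivity⟩
    have hcard : ∀ k : Fin n,
        2 ≤ Fintype.card ((fun _ : Fin n => ZMod ((P + 2) ^ (P + 1))) k) := by
      intro k
      simp only [ZMod.card]
      calc 2 ≤ P + 2 := by omega
        _ ≤ (P + 2) ^ (P + 1) := Nat.le_self_pow (by omega) _
    have key := congrFun (congrFun
      (H (fun _ => ZMod ((P + 2) ^ (P + 1))) hcard
        (AuxPO.netf i j (P + 2) ((P + 2) ^ (P + 1)))) (fun _ => 0)) i
    obtain ⟨e1, -⟩ := AuxPO.eval i j (Ne.symm hji) (P + 2) ((P + 2) ^ (P + 1)) μ.phi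
    obtain ⟨e1', -⟩ := AuxPO.eval i j (Ne.symm hji) (P + 2) ((P + 2) ^ (P + 1)) μ'.phi
    rw [e1, e1'] at key
    have hd : ∀ L : List (Finset (Fin n)), L.length ≤ P →
        ∀ d ∈ AuxPO.D i j L, 1 ≤ d ∧ d < P + 2 := by
      intro L hL d hdm
      have := AuxPO.mem_D_bounds i j L d hdm
      omega
    have hlt : ∀ L : List (Finset (Fin n)), L.length ≤ P →
        AuxPO.encode (P + 2) (AuxPO.D i j L) < (P + 2) ^ (P + 1) := by
      intro L hL
      have h1 := AuxPO.encode_lt (B := P + 2) (by omega) _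
        (fun d hdm => (hd L hL d hdm).2)
      have h2 : (AuxPO.D i j L).length ≤ P :=
        le_trans (AuxPO.length_D_le i j L) hL
      calc AuxPO.encode (P + 2) (AuxPO.D i j L)
          < (P + 2) ^ (AuxPO.D i j L).length := h1
        _ ≤ (P + 2) ^ (P + 1) := Nat.pow_le_pow_right (by omega) (by omega)
    have hlen1 : μ.phi.length ≤ P := by omega
    have hlen2 : μ'.phi.length ≤ P := by omega
    have hval := congrArg ZMod.val key
    rw [ZMod.val_cast_of_lt (hlt _ hlen1), ZMod.val_cast_of_lt (hlt _ hlen2)] at hval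
    exact AuxPO.encode_inj _ _ (hd _ hlen1) (hd _ hlen2) hval
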